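/- Let p ≥ 1 and 0 ≤ q ≤ p be integers, and let x, y, z ∈ ℂ be nonzero with x ≠ 1, x·z ≠ 1, and x^{p−q−a}·y ≠ z^a (integer exponent p−q−a, possibly negative) for every integer a with 0 ≤ a ≤ p. Then ∑_{a=0}^{p−1} [ (1 − x^{−1})·(1 − x^{p−q−a}·y·z^{−a})·(1 − x^{1+a−p+q}·z^{1+a}·y^{−1}) ]^{−1} = x·y·(1 − x^p·z^p) / [ (1 − x)·(1 − x·z)·(1 − x^{p−q}·y)·(x^q·z^p − y) ]. (This sums the contributions of the p triangles T_a C T_{a+1} of the toric diagram of Y^{p,q} adjacent to the vertex C, by telescoping.) -/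

import Mathlib

open scoped BigOperators


private lemma key_term (x z u2 : ℂ) (hx : x ≠ 0) (hz : z ≠ 0)
    (hx1 : (1:ℂ) - x ≠ 0) (hxz : (1:ℂ) - x*z ≠ 0) (hu2 : u2 ≠ 0)
    (h1 : (1:ℂ) - u2*(x*z) ≠ 0) (h2 : (1:ℂ) - u2 ≠ 0) :
    ((1 - x⁻¹) * (1 - u2*(x*z)) * (1 - u2⁻¹))⁻¹
    = x * u2 / ((1-x)*(1-x*z)*(1 - u2))
      - x * (u2*(x*z)) / ((1-x)*(1-x*z)*(1 - u2*(x*z))) := by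
  have hD2 : (1-x)*(1-x*z)*(1 - u2) ≠ 0 := mul_ne_zero (mul_ne_zero hx1 hxz) h2
  have hD1 : (1-x)*(1-x*z)*(1 - u2*(x*z)) ≠ 0 := mul_ne_zero (mul_ne_zero hx1 hxz) h1
  apply inv_eq_of_mul_eq_one_right
  rw [div_sub_div _ _ hD2 hD1, mul_div_assoc', div_eq_one_iff_eq (mul_ne_zero hD2 hD1)]
  have e1 : (1:ℂ) - x⁻¹ = (x - 1) * x⁻¹ := by field_simp
  have e2 : (1:ℂ) - u2⁻¹ = (u2 - 1) * u2⁻¹ := by field_simp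
  rw [e1, e2]
  field_simp
  ring

private lemma key_final (x z X A Z y : ℂ) (hX : X ≠ 0) (hA : A ≠ 0) (hZ : Z ≠ 0)
    (hy : y ≠ 0) (h1 : (1:ℂ) - x ≠ 0) (h2 : (1:ℂ) - x*z ≠ 0)
    (h3 : (1:ℂ) - X*y ≠ 0) (h4 : A*Z - y ≠ 0) :
    x * (X*y*(X*A*Z)⁻¹) / ((1-x)*(1-x*z)*(1 - X*y*(X*A*Z)⁻¹))
      - x * (X*y) / ((1-x)*(1-x*z)*(1 - X*y))
    = x*y*(1 - X*A*Z) / ((1-x)*(1-x*z)*(1 - X*y)*(A*Z - y)) := by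
  have hAZ : A*Z ≠ 0 := mul_ne_zero hA hZ
  have e1 : X*y*(X*A*Z)⁻¹ = y/(A*Z) := by field_simp
  have e2 : (1:ℂ) - y/(A*Z) = (A*Z - y)/(A*Z) := by field_simp
  rw [e1, e2]
  have h5 : (A*Z-y)/(A*Z) ≠ 0 := div_ne_zero h4 hAZ
  have h3' : (1:ℂ) - y*X ≠ 0 := by rwa [mul_comm]
  field_simp
  ring

/-- Telescoping sum over the triangles `T_a C T_{a+1}` of the toric diagram of
`Y^{p,q}` adjacent to the vertex `C`: for `1 ≤ p`, `q ≤ p` and nonzero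
`x, y, z ∈ ℂ` with `x ≠ 1`, `x z ≠ 1` and `x^{p-q-a} y ≠ z^a` for `0 ≤ a ≤ p`,
`∑_{a=0}^{p-1} [(1 - x⁻¹)(1 - x^{p-q-a} y z^{-a})(1 - x^{1+a-p+q} z^{1+a} y^{-1})]⁻¹
  = x y (1 - x^p z^p)/((1-x)(1-xz)(1 - x^{p-q} y)(x^q z^p - y))`. -/
theorem Ypq_triangles_C (p q : ℕ) (hp : 1 ≤ p) (hq : q ≤ p) (x y z : ℂ)
    (hx : x ≠ 0) (hy : y ≠ 0) (hz : z ≠ 0)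
    (hx1 : x ≠ 1) (hxz : x * z ≠ 1)
    (h : ∀ a : ℕ, a ≤ p → x ^ ((p : ℤ) - (q : ℤ) - (a : ℤ)) * y ≠ z ^ a) :
    ∑ a ∈ Finset.range p,
      ((1 - x⁻¹) * (1 - x ^ ((p : ℤ) - (q : ℤ) - (a : ℤ)) * y * (z ^ a)⁻¹) *
        (1 - x ^ (1 + (a : ℤ) - (p : ℤ) + (q : ℤ)) * z ^ (a + 1) * y⁻¹))⁻¹
    = x * y * (1 - x ^ p * z ^ p) /
        ((1 - x) * (1 - x * z) * (1 - x ^ (p - q) * y) * (x ^ q * z ^ p - y)) := by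
  have hxz0 : x * z ≠ 0 := mul_ne_zero hx hz
  have hx1' : (1:ℂ) - x ≠ 0 := sub_ne_zero_of_ne (Ne.symm hx1)
  have hxz1' : (1:ℂ) - x * z ≠ 0 := sub_ne_zero_of_ne (Ne.symm hxz)
  set u : ℕ → ℂ := fun a => x ^ ((p:ℤ) - (q:ℤ)) * y * ((x*z)⁻¹) ^ a with hu_def
  have hu0 : ∀ a : ℕ, u a ≠ 0 := fun a =>
    mul_ne_zero (mul_ne_zero (zpow_ne_zero _ hx) hy) (pow_ne_zero _ (inv_ne_zero hxz0))
  have hrep1 : ∀ a : ℕ, x ^ ((p:ℤ) - (q:ℤ) - (a:ℤ)) * y * ((z:ℂ) ^ a)⁻¹ = u a := by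
    intro a
    rw [hu_def]
    simp only []
    rw [zpow_sub₀ hx, zpow_natCast, inv_pow, mul_pow]
    have hza : (z:ℂ) ^ a ≠ 0 := pow_ne_zero _ hz
    have hxa : (x:ℂ) ^ a ≠ 0 := pow_ne_zero _ hx
    field_simp
  have hrep2 : ∀ a : ℕ, x ^ (1 + (a:ℤ) - (p:ℤ) + (q:ℤ)) * z ^ (a+1) * y⁻¹ = (u (a+1))⁻¹ := by
    intro a
    rw [hu_def]
    simp only []
    have e : (1 + (a:ℤ) - (p:ℤ) + (q:ℤ)) = ((a+1:ℕ):ℤ) - ((p:ℤ) - (q:ℤ)) := by push_cast; ring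
    rw [e, zpow_sub₀ hx, zpow_natCast]
    rw [mul_inv, mul_inv, inv_pow, inv_inv, mul_pow]
    have hxE : x ^ ((p:ℤ) - (q:ℤ)) ≠ 0 := zpow_ne_zero _ hx
    have hxa : (x:ℂ) ^ (a+1) ≠ 0 := pow_ne_zero _ hx
    have hza : (z:ℂ) ^ (a+1) ≠ 0 := pow_ne_zero _ hz
    field_simp
  have hune : ∀ a : ℕ, a ≤ p → (1:ℂ) - u a ≠ 0 := by
    intro a ha
    refine sub_ne_zero_of_ne (fun hc => h a ha ?_)
    rw [← hrep1 a] at hc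
    exact (mul_inv_eq_one₀ (pow_ne_zero a hz)).mp hc.symm
  have hrel : ∀ a : ℕ, u a = u (a+1) * (x*z) := by
    intro a
    simp only [hu_def, pow_succ, mul_assoc]
    rw [inv_mul_cancel₀ hxz0, mul_one]
  set g : ℕ → ℂ := fun a => x * u a / ((1-x)*(1-x*z)*(1 - u a)) with hg_def
  have hterm : ∀ a ∈ Finset.range p,
      ((1 - x⁻¹) * (1 - x ^ ((p : ℤ) - (q : ℤ) - (a : ℤ)) * y * (z ^ a)⁻¹) *
        (1 - x ^ (1 + (a : ℤ) - (p : ℤ) + (q : ℤ)) * z ^ (a + 1) * y⁻¹))⁻¹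
      = g (a+1) - g a := by
    intro a ha
    rw [Finset.mem_range] at ha
    rw [hrep1 a, hrep2 a, hg_def]
    simp only []
    rw [hrel a]
    exact key_term x z (u (a+1)) hx hz hx1' hxz1' (hu0 (a+1))
      (hrel a ▸ hune a (le_of_lt ha)) (hune (a+1) ha)
  rw [Finset.sum_congr rfl hterm, Finset.sum_range_sub g]
  -- final algebra
  have ecast : ((p - q : ℕ) : ℤ) = (p:ℤ) - (q:ℤ) := by omega
  have eX : x ^ ((p:ℤ) - (q:ℤ)) = x ^ (p - q) := by rw [← ecast, zpow_natCast]
  have eP : x ^ p = x ^ (p - q) * x ^ q := by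
    rw [← pow_add, Nat.sub_add_cancel hq]
  have hup : u p = x ^ (p-q) * y * (x ^ (p-q) * x ^ q * z ^ p)⁻¹ := by
    rw [hu_def]
    simp only []
    rw [eX, inv_pow, mul_pow, ← eP]
  have hu0' : u 0 = x ^ (p-q) * y := by
    rw [hu_def]; simp only [pow_zero, mul_one]; rw [eX]
  have h3 : (1:ℂ) - x ^ (p-q) * y ≠ 0 := by
    have := hune 0 (Nat.zero_le p); rwa [hu0'] at this
  have h4 : x ^ q * z ^ p - y ≠ 0 := by
    have h5 := hune p le_rfl
    rw [hup] at h5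
    intro hc
    apply h5
    have hAZ : x ^ q * z ^ p ≠ 0 := mul_ne_zero (pow_ne_zero _ hx) (pow_ne_zero _ hz)
    have hXne : (x:ℂ) ^ (p-q) ≠ 0 := pow_ne_zero _ hx
    have hy' : y = x ^ q * z ^ p := by linear_combination -hc
    rw [hy']
    field_simp
    ring
  have := key_final x z (x ^ (p-q)) (x ^ q) (z ^ p) y (pow_ne_zero _ hx)
    (pow_ne_zero _ hx) (pow_ne_zero _ hz) hy hx1' hxz1' h3 h4
  rw [hg_def]
  simp only []
  rw [hup, hu0', eP]
  exact this
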